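/- With K, μ, ρ_ε as above, the measures ν_ε(dx) = ρ_ε(x) μ(dx) converge weakly as ε → 0 to the conditioned measure ν(I) = μ(K ∩ I)/μ(K). -/

import Mathlib

open MeasureTheory Filter Real

/-- The penalized measures `ν_ε(dx) = ρ_ε(x) μ(dx)`, with
`ρ_ε = Z_ε⁻¹ exp(−d_K²/ε)`, converge weakly as `ε → 0⁺` to the conditioned
measure `ν = μ(K)⁻¹ μ|_K`. -/
theorem penalized_measures_weak_convergence {H : Type*} [NormedAddCommGroup H]
    [InnerProductSpace ℝ H] [CompleteSpace H] [MeasurableSpace H] [BorelSpace H]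
    (μ : Measure H) [IsProbabilityMeasure μ]
    (K : Set H) (hKcl : IsClosed K) (hKconv : Convex ℝ K) (hK : 0 < μ K) :
    ∀ f : BoundedContinuousFunction H ℝ,
      Tendsto (fun ε : ℝ =>
          ∫ x, f x ∂(μ.withDensity (fun x => ENNReal.ofReal
            ((∫ y, Real.exp (-(Metric.infDist y K) ^ 2 / ε) ∂μ)⁻¹ *
              Real.exp (-(Metric.infDist x K) ^ 2 / ε)))))
        (nhdsWithin 0 (Set.Ioi 0))
        (nhds (∫ x, f x ∂((μ K)⁻¹ • μ.restrict K))) := by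
  intro f
  have hKmeas : MeasurableSet K := hKcl.measurableSet
  have hKne : K.Nonempty := by
    rcases Set.eq_empty_or_nonempty K with h | h
    · simp [h] at hK
    · exact h
  have hdcont : Continuous (fun x : H => Metric.infDist x K) :=
    Metric.continuous_infDist_pt K
  set g : ℝ → H → ℝ := fun ε x => Real.exp (-(Metric.infDist x K) ^ 2 / ε) with hgdef
  have hgcont : ∀ ε, Continuous (g ε) := fun ε =>
    Real.continuous_exp.comp (((hdcont.pow 2).neg).div_const ε)
  have hgpos : ∀ ε x, 0 < g ε x := fun ε x => Real.exp_pos _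
  have hgle : ∀ ε ∈ Set.Ioi (0 : ℝ), ∀ x, g ε x ≤ 1 := by
    intro ε hε x
    calc g ε x ≤ Real.exp 0 := by
          apply Real.exp_le_exp.mpr
          apply div_nonpos_of_nonpos_of_nonneg
          · simpa using sq_nonneg (Metric.infDist x K)
          · exact le_of_lt hε
      _ = 1 := Real.exp_zero
  have hglim : ∀ x, Tendsto (fun ε => g ε x) (nhdsWithin 0 (Set.Ioi 0))
      (nhds (K.indicator (fun _ => (1 : ℝ)) x)) := by
    intro x
    by_cases hx : x ∈ K
    · have h0 : Metric.infDist x K = 0 := Metric.infDist_zero_of_mem hx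
      have : (fun ε : ℝ => g ε x) = fun _ => 1 := by
        funext ε; simp [hgdef, h0]
      rw [this, Set.indicator_of_mem hx]
      exact tendsto_const_nhds
    · rw [Set.indicator_of_notMem hx]
      have hdx : 0 < Metric.infDist x K :=
        (hKcl.notMem_iff_infDist_pos hKne).mp hx
      have hsq : 0 < (Metric.infDist x K) ^ 2 := pow_pos hdx 2
      have htop : Tendsto (fun ε : ℝ => (Metric.infDist x K) ^ 2 * ε⁻¹)
          (nhdsWithin 0 (Set.Ioi 0)) atTop :=
        Tendsto.const_mul_atTop hsq tendsto_inv_nhdsGT_zero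
      have hbot : Tendsto (fun ε : ℝ => -(Metric.infDist x K) ^ 2 / ε)
          (nhdsWithin 0 (Set.Ioi 0)) atBot := by
        have : (fun ε : ℝ => -(Metric.infDist x K) ^ 2 / ε)
            = fun ε : ℝ => -((Metric.infDist x K) ^ 2 * ε⁻¹) := by
          funext ε; ring
        rw [this]
        exact tendsto_neg_atBot_iff.mpr htop
      exact Real.tendsto_exp_atBot.comp hbot
  set Z : ℝ → ℝ := fun ε => ∫ x, g ε x ∂μ with hZdef
  have hgint : ∀ ε ∈ Set.Ioi (0 : ℝ), Integrable (g ε) μ := by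
    intro ε hε
    refine (integrable_const (1 : ℝ)).mono' (hgcont ε).aestronglyMeasurable ?_
    filter_upwards with x
    rw [Real.norm_eq_abs, abs_of_pos (hgpos ε x)]
    exact hgle ε hε x
  have hZlim : Tendsto Z (nhdsWithin 0 (Set.Ioi 0)) (nhds (μ K).toReal) := by
    have h := tendsto_integral_filter_of_dominated_convergence
      (μ := μ) (F := g) (f := K.indicator (fun _ => (1 : ℝ)))
      (l := nhdsWithin 0 (Set.Ioi 0)) (fun _ => (1 : ℝ))
      (Filter.Eventually.of_forall fun ε => (hgcont ε).aestronglyMeasurable)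
      (by
        filter_upwards [self_mem_nhdsWithin] with ε hε
        filter_upwards with x
        rw [Real.norm_eq_abs, abs_of_pos (hgpos ε x)]
        exact hgle ε hε x)
      (integrable_const 1)
      (Filter.Eventually.of_forall hglim)
    have heq : ∫ a, K.indicator (fun _ => (1 : ℝ)) a ∂μ = (μ K).toReal := by
      rw [integral_indicator hKmeas]
      simp
      rfl
    rwa [heq] at h
  have hZpos : ∀ ε ∈ Set.Ioi (0 : ℝ), 0 < Z ε := by
    intro ε hε
    rw [hZdef]
    rw [integral_pos_iff_support_of_nonneg_ae
      (Filter.Eventually.of_forall fun x => (hgpos ε x).le) (hgint ε hε)]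
    have hsupp : Function.support (g ε) = Set.univ := by
      ext x; simp [Function.mem_support, (hgpos ε x).ne']
    rw [hsupp]
    simp
  set N : ℝ → ℝ := fun ε => ∫ x, g ε x * f x ∂μ with hNdef
  have hind : (fun x => K.indicator (fun _ => (1 : ℝ)) x * f x)
      = K.indicator (fun y => f y) := by
    funext x
    by_cases hx : x ∈ K <;> simp [hx]
  have hNlim : Tendsto N (nhdsWithin 0 (Set.Ioi 0)) (nhds (∫ x in K, f x ∂μ)) := by
    have h := tendsto_integral_filter_of_dominated_convergence
      (μ := μ) (F := fun ε x => g ε x * f x)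
      (f := fun x => K.indicator (fun _ => (1 : ℝ)) x * f x)
      (l := nhdsWithin 0 (Set.Ioi 0)) (fun _ => ‖f‖)
      (Filter.Eventually.of_forall fun ε =>
        ((hgcont ε).mul f.continuous).aestronglyMeasurable)
      (by
        filter_upwards [self_mem_nhdsWithin] with ε hε
        filter_upwards with x
        rw [norm_mul, Real.norm_eq_abs (g ε x), abs_of_pos (hgpos ε x)]
        calc g ε x * ‖f x‖ ≤ 1 * ‖f‖ := by
              apply mul_le_mul (hgle ε hε x) (f.norm_coe_le_norm x)
                (norm_nonneg _) zero_le_one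
          _ = ‖f‖ := one_mul _)
      (integrable_const ‖f‖)
      (Filter.Eventually.of_forall fun x => (hglim x).mul_const (f x))
    rw [hind, integral_indicator hKmeas] at h
    exact h
  have hμKfin : μ K ≠ ⊤ := measure_ne_top μ K
  have htoR : (μ K).toReal ≠ 0 :=
    ENNReal.toReal_ne_zero.mpr ⟨hK.ne', hμKfin⟩
  have hRHS : ∫ x, f x ∂((μ K)⁻¹ • μ.restrict K)
      = (μ K).toReal⁻¹ * ∫ x in K, f x ∂μ := by
    rw [integral_smul_measure, ENNReal.toReal_inv, smul_eq_mul]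
  rw [hRHS]
  have hmain : Tendsto (fun ε => (Z ε)⁻¹ * N ε) (nhdsWithin 0 (Set.Ioi 0))
      (nhds ((μ K).toReal⁻¹ * ∫ x in K, f x ∂μ)) :=
    (hZlim.inv₀ htoR).mul hNlim
  refine hmain.congr' ?_
  filter_upwards [self_mem_nhdsWithin] with ε hε
  have hnn : ∀ x, 0 ≤ (Z ε)⁻¹ * g ε x := fun x =>
    mul_nonneg (inv_nonneg.mpr (hZpos ε hε).le) (hgpos ε x).le
  have hmeas : Measurable (fun x => ((Z ε)⁻¹ * g ε x).toNNReal) :=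
    (measurable_const.mul (hgcont ε).measurable).real_toNNReal
  have hofReal : (fun x => ENNReal.ofReal
      ((∫ y, Real.exp (-(Metric.infDist y K) ^ 2 / ε) ∂μ)⁻¹ *
        Real.exp (-(Metric.infDist x K) ^ 2 / ε)))
      = fun x => ((((Z ε)⁻¹ * g ε x).toNNReal : NNReal) : ENNReal) := rfl
  have hcoe : ∀ x : H, (((Z ε)⁻¹ * g ε x).toNNReal : ℝ) = (Z ε)⁻¹ * g ε x :=
    fun x => Real.coe_toNNReal _ (hnn x)
  calc (Z ε)⁻¹ * N ε = ∫ x, (Z ε)⁻¹ * (g ε x * f x) ∂μ := by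
        rw [hNdef, integral_const_mul]
    _ = ∫ x, (((Z ε)⁻¹ * g ε x).toNNReal : NNReal) • f x ∂μ := by
        congr 1; funext x
        rw [NNReal.smul_def, hcoe x, smul_eq_mul, mul_assoc]
    _ = ∫ x, f x ∂(μ.withDensity fun x => ((((Z ε)⁻¹ * g ε x).toNNReal : NNReal) : ENNReal)) :=
        (integral_withDensity_eq_integral_smul hmeas _).symm
    _ = _ := by rw [← hofReal]
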